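/- Let a, b, z be positive integers and let α be a real number with 0 ≤ α ≤ ab/(a+b)^2 such that Λ₁ = za/(a+b) - α(a+b) and Λ₂ = zb/(a+b) + α(a+b) are nonnegative integers. Then b·ρ_a(Λ₁)(a - ρ_a(Λ₁)) + a·ρ_b(Λ₂)(b - ρ_b(Λ₂)) ≥ α(a+b)(ab - α(a+b)^2). -/

import Mathlib

open Finset BigOperators

lemma key_int (a b r₁ r₂ T : ℤ) (ha : 0 < a) (hb : 0 < b)
    (hr₁ : 0 ≤ r₁) (hr₁' : r₁ < a) (hr₂ : 0 ≤ r₂) (hr₂' : r₂ < b)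
    (hcase : T = a * r₂ - b * r₁ ∨ T = a * b + (a * r₂ - b * r₁)) :
    a * b * (a + b) * (b * r₁ * (a - r₁) + a * r₂ * (b - r₂))
      ≥ a * b * (T * (a * b - T)) := by
  have hX0 : (0:ℤ) ≤ b * r₁ := mul_nonneg hb.le hr₁
  have hY0 : (0:ℤ) ≤ a * r₂ := mul_nonneg ha.le hr₂
  have hX1 : b * r₁ ≤ a * b := by nlinarith
  have hY1 : a * r₂ ≤ a * b := by nlinarith
  have p1 : (0:ℤ) ≤ a * a * ((b * r₁) * (a * b - b * r₁)) :=
    mul_nonneg (mul_nonneg ha.le ha.le) (mul_nonneg hX0 (by linarith))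
  have p2 : (0:ℤ) ≤ b * b * ((a * r₂) * (a * b - a * r₂)) :=
    mul_nonneg (mul_nonneg hb.le hb.le) (mul_nonneg hY0 (by linarith))
  have p3 : (0:ℤ) ≤ a * b * ((b * r₁) * (a * b - a * r₂)) :=
    mul_nonneg (mul_nonneg ha.le hb.le) (mul_nonneg hX0 (by linarith))
  have p4 : (0:ℤ) ≤ a * b * ((a * r₂) * (a * b - b * r₁)) :=
    mul_nonneg (mul_nonneg ha.le hb.le) (mul_nonneg hY0 (by linarith))
  rcases hcase with h | h <;> subst h <;> nlinarith [p1, p2, p3, p4, mul_pos ha hb]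

/-- Lemma 4.2. -/
theorem stmt_1 (a b z : ℕ) (ha : 0 < a) (hb : 0 < b) (hz : 0 < z)
    (α : ℝ) (hα0 : 0 ≤ α) (hα1 : α ≤ ((a : ℝ) * b) / ((a : ℝ) + b) ^ 2)
    (Λ₁ Λ₂ : ℕ)
    (h1 : (Λ₁ : ℝ) = (z : ℝ) * a / ((a : ℝ) + b) - α * ((a : ℝ) + b))
    (h2 : (Λ₂ : ℝ) = (z : ℝ) * b / ((a : ℝ) + b) + α * ((a : ℝ) + b)) :
    (b : ℝ) * ((Λ₁ % a : ℕ) : ℝ) * ((a : ℝ) - ((Λ₁ % a : ℕ) : ℝ))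
      + (a : ℝ) * ((Λ₂ % b : ℕ) : ℝ) * ((b : ℝ) - ((Λ₂ % b : ℕ) : ℝ))
      ≥ α * ((a : ℝ) + b) * ((a : ℝ) * b - α * ((a : ℝ) + b) ^ 2) := by
  have haR : (0:ℝ) < a := by exact_mod_cast ha
  have hbR : (0:ℝ) < b := by exact_mod_cast hb
  have habR : (0:ℝ) < (a:ℝ) + b := by linarith
  set T : ℤ := (a:ℤ) * Λ₂ - (b:ℤ) * Λ₁ with hTdef
  have hT : (T:ℝ) = α * ((a:ℝ) + b) ^ 2 := by
    have : ((T:ℤ):ℝ) = (a:ℝ) * Λ₂ - (b:ℝ) * Λ₁ := by push_cast [hTdef]; ring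
    rw [this]
    rw [h1, h2]
    ring
  -- bounds on T
  have hT0 : (0:ℤ) ≤ T := by
    have : (0:ℝ) ≤ (T:ℝ) := by rw [hT]; positivity
    exact_mod_cast this
  have hT1 : T ≤ (a:ℤ) * b := by
    have hs : (0:ℝ) < ((a:ℝ)+b)^2 := by positivity
    have h'' : α * ((a:ℝ)+b)^2 ≤ ((a:ℝ)*b/((a:ℝ)+b)^2) * ((a:ℝ)+b)^2 :=
      mul_le_mul_of_nonneg_right hα1 hs.le
    rw [div_mul_cancel₀ _ hs.ne'] at h''
    have h' : (T:ℝ) ≤ (a:ℝ) * b := by rw [hT]; linarith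
    exact_mod_cast h'
  -- residues
  set r₁ : ℕ := Λ₁ % a with hr1def
  set r₂ : ℕ := Λ₂ % b with hr2def
  have hdm1 : (Λ₁:ℤ) = (a:ℤ) * (Λ₁ / a : ℕ) + (r₁:ℤ) := by
    exact_mod_cast (Nat.div_add_mod Λ₁ a).symm
  have hdm2 : (Λ₂:ℤ) = (b:ℤ) * (Λ₂ / b : ℕ) + (r₂:ℤ) := by
    exact_mod_cast (Nat.div_add_mod Λ₂ b).symm
  set k : ℤ := ((Λ₂ / b : ℕ) : ℤ) - ((Λ₁ / a : ℕ) : ℤ) with hkdef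
  have hk : T = (a:ℤ) * b * k + ((a:ℤ) * r₂ - (b:ℤ) * r₁) := by
    rw [hTdef, hkdef]; linear_combination (a:ℤ) * hdm2 - (b:ℤ) * hdm1
  have hr₁' : (r₁:ℤ) < a := by exact_mod_cast Nat.mod_lt _ ha
  have hr₂' : (r₂:ℤ) < b := by exact_mod_cast Nat.mod_lt _ hb
  have hr₁0 : (0:ℤ) ≤ (r₁:ℤ) := Int.ofNat_nonneg _
  have hr₂0 : (0:ℤ) ≤ (r₂:ℤ) := Int.ofNat_nonneg _
  have haZ : (0:ℤ) < a := by exact_mod_cast ha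
  have hbZ : (0:ℤ) < b := by exact_mod_cast hb
  -- k ∈ {0, 1}
  have hk0 : 0 ≤ k := by
    by_contra h
    push_neg at h
    have : k ≤ -1 := by omega
    nlinarith
  have hk1 : k ≤ 1 := by
    by_contra h
    push_neg at h
    have : 2 ≤ k := by omega
    nlinarith
  have hcase : T = (a:ℤ) * r₂ - (b:ℤ) * r₁ ∨ T = (a:ℤ) * b + ((a:ℤ) * r₂ - (b:ℤ) * r₁) := by
    interval_cases k
    · left; linarith [hk]
    · right; linarith [hk]
  have hkey := key_int (a:ℤ) (b:ℤ) (r₁:ℤ) (r₂:ℤ) T haZ hbZ hr₁0 hr₁' hr₂0 hr₂' hcase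
  have hkeyR : (a:ℝ) * b * ((a:ℝ) + b) * ((b:ℝ) * r₁ * ((a:ℝ) - r₁) + (a:ℝ) * r₂ * ((b:ℝ) - r₂))
      ≥ (a:ℝ) * b * ((T:ℝ) * ((a:ℝ) * b - (T:ℝ))) := by exact_mod_cast hkey
  -- conclude
  have hrhs : α * ((a:ℝ) + b) * ((a:ℝ) * b - α * ((a:ℝ) + b) ^ 2)
      = (T:ℝ) * ((a:ℝ) * b - (T:ℝ)) / ((a:ℝ) + b) := by
    rw [eq_div_iff habR.ne']
    linear_combination (α * ((a:ℝ)+b)^2 + (T:ℝ) - (a:ℝ)*b) * hT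
  rw [hrhs, ge_iff_le, div_le_iff₀ habR]
  have h9 : (a:ℝ)*b*((T:ℝ) * ((a:ℝ)*b - (T:ℝ)))
      ≤ (a:ℝ)*b*(((b:ℝ) * r₁ * ((a:ℝ) - r₁) + (a:ℝ) * r₂ * ((b:ℝ) - r₂)) * ((a:ℝ)+b)) := by
    linarith [hkeyR]
  exact le_of_mul_le_mul_left h9 (mul_pos haR hbR)
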